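/- For θ₁, θ₂, θ₃ ∈ ℝ let p(θ₁,θ₂,θ₃) = ½(e^{iθ₁}, e^{iθ₂}, e^{iθ₃}, e^{i(π/2−θ₁−θ₂−θ₃)}) ∈ ℂ⁴ and let Y₁, Y₂, Y₃ be the partial derivatives of p with respect to θ₁, θ₂, θ₃ (so Yⱼ has entry (i/2)e^{iθⱼ} in slot j, entry −(i/2)e^{i(π/2−θ₁−θ₂−θ₃)} in slot 4, and 0 elsewhere). Then ω₀(a,b) = 0 for all a, b ∈ {p, Y₁, Y₂, Y₃}, and Im Ω₀(p, Y₁, Y₂, Y₃) = 0. Hence the cone over the torus A₁ = {p(θ₁,θ₂,θ₃)} is special Lagrangian in ℂ⁴, so A₁ is a minimal Legendrian, hence associative, 3-torus in S⁷. -/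

import Mathlib

noncomputable section

open Complex Real

/-- `ℂ⁴` as functions `Fin 4 → ℂ`. -/
abbrev C4 := Fin 4 → ℂ

/-- The Kähler form on `ℂ⁴`: `ω₀(u,v) = Σⱼ Im (conj uⱼ * vⱼ)`. -/
def omega0 (u v : C4) : ℝ := ∑ j, ((starRingEnd ℂ) (u j) * v j).im

/-- The holomorphic volume form on `ℂ⁴`: determinant of the complex 4×4 matrix with
columns `v₁, v₂, v₃, v₄`. -/
def Omega0 (v₁ v₂ v₃ v₄ : C4) : ℂ :=
  Matrix.det (Matrix.of fun r c => ![v₁, v₂, v₃, v₄] c r)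

/-- The point `p(θ₁,θ₂,θ₃) = ½(e^{iθ₁}, e^{iθ₂}, e^{iθ₃}, e^{i(π/2−θ₁−θ₂−θ₃)})` of the
torus `A₁`. -/
def pt (θ₁ θ₂ θ₃ : ℝ) : C4 :=
  ![(1 / 2 : ℂ) * Complex.exp (Complex.I * (θ₁ : ℂ)),
    (1 / 2 : ℂ) * Complex.exp (Complex.I * (θ₂ : ℂ)),
    (1 / 2 : ℂ) * Complex.exp (Complex.I * (θ₃ : ℂ)),
    (1 / 2 : ℂ) * Complex.exp (Complex.I * ((Real.pi / 2 - θ₁ - θ₂ - θ₃ : ℝ) : ℂ))]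

/-- `Y₁ = ∂p/∂θ₁`. -/
def Y1 (θ₁ θ₂ θ₃ : ℝ) : C4 :=
  ![(Complex.I / 2) * Complex.exp (Complex.I * (θ₁ : ℂ)), 0, 0,
    -(Complex.I / 2) * Complex.exp (Complex.I * ((Real.pi / 2 - θ₁ - θ₂ - θ₃ : ℝ) : ℂ))]

/-- `Y₂ = ∂p/∂θ₂`. -/
def Y2 (θ₁ θ₂ θ₃ : ℝ) : C4 :=
  ![0, (Complex.I / 2) * Complex.exp (Complex.I * (θ₂ : ℂ)), 0,
    -(Complex.I / 2) * Complex.exp (Complex.I * ((Real.pi / 2 - θ₁ - θ₂ - θ₃ : ℝ) : ℂ))]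

/-- `Y₃ = ∂p/∂θ₃`. -/
def Y3 (θ₁ θ₂ θ₃ : ℝ) : C4 :=
  ![0, 0, (Complex.I / 2) * Complex.exp (Complex.I * (θ₃ : ℂ)),
    -(Complex.I / 2) * Complex.exp (Complex.I * ((Real.pi / 2 - θ₁ - θ₂ - θ₃ : ℝ) : ℂ))]


lemma conjmul (θ : ℝ) :
    (starRingEnd ℂ) (Complex.exp (Complex.I * (θ:ℂ))) * Complex.exp (Complex.I * (θ:ℂ)) = 1 := by
  rw [← Complex.exp_conj, ← Complex.exp_add]
  simp

lemma slot (x y : ℂ) (θ : ℝ) :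
    (starRingEnd ℂ) (x * Complex.exp (Complex.I * (θ:ℂ))) * (y * Complex.exp (Complex.I * (θ:ℂ)))
      = (starRingEnd ℂ) x * y := by
  rw [map_mul]
  linear_combination ((starRingEnd ℂ) x * y) * conjmul θ

lemma prod4 (θ₁ θ₂ θ₃ : ℝ) :
    Complex.exp (Complex.I * (θ₁:ℂ)) * Complex.exp (Complex.I * (θ₂:ℂ)) *
    Complex.exp (Complex.I * (θ₃:ℂ)) *
    Complex.exp (Complex.I * ((Real.pi / 2 - θ₁ - θ₂ - θ₃ : ℝ) : ℂ)) = Complex.I := by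
  rw [← Complex.exp_add, ← Complex.exp_add, ← Complex.exp_add]
  have : Complex.I * (θ₁:ℂ) + Complex.I * (θ₂:ℂ) + Complex.I * (θ₃:ℂ) +
      Complex.I * ((Real.pi / 2 - θ₁ - θ₂ - θ₃ : ℝ) : ℂ) = (Real.pi/2 : ℝ) * Complex.I := by
    push_cast; ring
  rw [this, Complex.exp_mul_I]
  simp

lemma det4 (a b c d e f g h i j k l m n o p : ℂ) :
    Matrix.det (Matrix.of ![![a,b,c,d],![e,f,g,h],![i,j,k,l],![m,n,o,p]]) =
      a*(f*(k*p-l*o)-g*(j*p-l*n)+h*(j*o-k*n))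
      - b*(e*(k*p-l*o)-g*(i*p-l*m)+h*(i*o-k*m))
      + c*(e*(j*p-l*n)-f*(i*p-l*m)+h*(i*n-j*m))
      - d*(e*(j*o-k*n)-f*(i*o-k*m)+g*(i*n-j*m)) := by
  simp [Matrix.det_succ_row_zero, Fin.sum_univ_succ, Fin.succAbove]
  ring

set_option maxHeartbeats 2000000 in

/-- The cone over the torus `A₁` is special Lagrangian in `ℂ⁴`: `ω₀` vanishes on all
pairs from `{p, Y₁, Y₂, Y₃}` and `Im Ω₀(p, Y₁, Y₂, Y₃) = 0`.  Hence `A₁` is a minimal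
Legendrian, hence associative, 3-torus in `S⁷`. -/
theorem torus_A1_cone_is_specialLagrangian (θ₁ θ₂ θ₃ : ℝ) :
    (∀ a ∈ ({pt θ₁ θ₂ θ₃, Y1 θ₁ θ₂ θ₃, Y2 θ₁ θ₂ θ₃, Y3 θ₁ θ₂ θ₃} : Set C4),
     ∀ b ∈ ({pt θ₁ θ₂ θ₃, Y1 θ₁ θ₂ θ₃, Y2 θ₁ θ₂ θ₃, Y3 θ₁ θ₂ θ₃} : Set C4),
      omega0 a b = 0) ∧
    (Omega0 (pt θ₁ θ₂ θ₃) (Y1 θ₁ θ₂ θ₃) (Y2 θ₁ θ₂ θ₃) (Y3 θ₁ θ₂ θ₃)).im = 0 := by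
  have sq1 : ∀ θ : ℝ, (Complex.exp (Complex.I * (θ:ℂ))).re * (Complex.exp (Complex.I * (θ:ℂ))).re
      + (Complex.exp (Complex.I * (θ:ℂ))).im * (Complex.exp (Complex.I * (θ:ℂ))).im = 1 := by
    intro θ
    have h := congrArg Complex.re (conjmul θ)
    simpa [Complex.mul_re] using h
  have s1 := sq1 θ₁
  have s2 := sq1 θ₂
  have s3 := sq1 θ₃
  have s4 := sq1 (Real.pi/2 - θ₁ - θ₂ - θ₃)
  push_cast at s4
  constructor
  · intro a ha b hb
    simp only [Set.mem_insert_iff, Set.mem_singleton_iff] at ha hb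
    rcases ha with rfl | rfl | rfl | rfl <;> rcases hb with rfl | rfl | rfl | rfl <;>
      simp [omega0, Fin.sum_univ_four, pt, Y1, Y2, Y3] <;> linarith [s1, s2, s3, s4]
  · have hdet : Omega0 (pt θ₁ θ₂ θ₃) (Y1 θ₁ θ₂ θ₃) (Y2 θ₁ θ₂ θ₃) (Y3 θ₁ θ₂ θ₃) = -(1/4) := by
      have hm : (Matrix.of fun r c => ![pt θ₁ θ₂ θ₃, Y1 θ₁ θ₂ θ₃, Y2 θ₁ θ₂ θ₃, Y3 θ₁ θ₂ θ₃] c r)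
          = Matrix.of
            ![![pt θ₁ θ₂ θ₃ 0, Y1 θ₁ θ₂ θ₃ 0, Y2 θ₁ θ₂ θ₃ 0, Y3 θ₁ θ₂ θ₃ 0],
              ![pt θ₁ θ₂ θ₃ 1, Y1 θ₁ θ₂ θ₃ 1, Y2 θ₁ θ₂ θ₃ 1, Y3 θ₁ θ₂ θ₃ 1],
              ![pt θ₁ θ₂ θ₃ 2, Y1 θ₁ θ₂ θ₃ 2, Y2 θ₁ θ₂ θ₃ 2, Y3 θ₁ θ₂ θ₃ 2],
              ![pt θ₁ θ₂ θ₃ 3, Y1 θ₁ θ₂ θ₃ 3, Y2 θ₁ θ₂ θ₃ 3, Y3 θ₁ θ₂ θ₃ 3]] := by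
        ext r c
        fin_cases r <;> fin_cases c <;> simp [Matrix.of_apply]
      rw [Omega0, hm, det4]
      simp only [pt, Y1, Y2, Y3, Matrix.cons_val_zero, Matrix.cons_val_one, Matrix.head_cons,
        Matrix.cons_val_two, Matrix.tail_cons, Matrix.cons_val_three]
      linear_combination (-(Complex.I^3)/4) * prod4 θ₁ θ₂ θ₃ - ((Complex.I^2 - 1)/4) * Complex.I_sq
    rw [hdet]; norm_num

end
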